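/- arXiv:1006.5688 — 4 statements merged into one kernel-verified Lean document; each statement's English description precedes it below -/
import Mathlib

section
/- Suppose the code C contains no codeword of Hamming weight 1. Then for every codeword u ∈ C (identified with a 0/1 point of ℝ^n), the Jacobian matrix of the rational map f at u is the zero matrix: ∂f_i/∂u_j(u) = 0 for all i, j ∈ {1,…,n}. (Here f is differentiable at u since H(u) = 1 ≠ 0.) Hence every codeword is a stable fixed point of f. -/
open Matrix Finset

/-- The codeword polynomial `F_x(u) = ∏ i, ρ_i(u_i)` with `ρ_i(u_i) = u_i` if `x_i = 1`
and `1 - u_i` if `x_i = 0`. -/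
noncomputable def codePoly {n : ℕ} (x : Fin n → ZMod 2) (u : Fin n → ℝ) : ℝ :=
  ∏ i, if x i = 1 then u i else 1 - u i

/-- The linear code `C = {mG : m ∈ 𝔽₂^k}` generated by the matrix `G`. -/
def code {k n : ℕ} (G : Matrix (Fin k) (Fin n) (ZMod 2)) : Finset (Fin n → ZMod 2) :=
  Finset.image (fun m => Matrix.vecMul m G) Finset.univ

/-- `H(u) = Σ_{x ∈ C} F_x(u)`. -/
noncomputable def Hfun {k n : ℕ} (G : Matrix (Fin k) (Fin n) (ZMod 2)) (u : Fin n → ℝ) : ℝ :=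
  ∑ x ∈ code G, codePoly x u

/-- `I_i(u) = Σ_{x ∈ C, x_i = 1} F_x(u)`. -/
noncomputable def Ifun {k n : ℕ} (G : Matrix (Fin k) (Fin n) (ZMod 2)) (i : Fin n)
    (u : Fin n → ℝ) : ℝ :=
  ∑ x ∈ (code G).filter (fun x => x i = 1), codePoly x u

/-- The rational map `f_i(u) = I_i(u)/H(u)`. -/
noncomputable def fmap {k n : ℕ} (G : Matrix (Fin k) (Fin n) (ZMod 2)) (i : Fin n)
    (u : Fin n → ℝ) : ℝ :=
  Ifun G i u / Hfun G u

/-- The point `p = (1/2, …, 1/2) ∈ ℝ^n`. -/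
noncomputable def pcenter (n : ℕ) : Fin n → ℝ := fun _ => 1/2

/-- Identification of a binary word with a 0/1 point of `ℝ^n`. -/
noncomputable def embed {n : ℕ} (w : Fin n → ZMod 2) : Fin n → ℝ :=
  fun i => if w i = 1 then 1 else 0

/- ### Auxiliary material -/

lemma zmod2_ne_one {a : ZMod 2} (h : a ≠ 1) : a = 0 := by
  revert h; revert a; decide

lemma factor_embed {n : ℕ} (x u : Fin n → ZMod 2) (i : Fin n) :
    (if x i = 1 then embed u i else 1 - embed u i) = if x i = u i then 1 else 0 := by
  unfold embed
  by_cases hx : x i = 1 <;> by_cases hu : u i = 1 <;>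
    simp [hx, hu, zmod2_ne_one, eq_comm]

lemma codePoly_embed {n : ℕ} (x u : Fin n → ZMod 2) :
    codePoly x (embed u) = if x = u then 1 else 0 := by
  unfold codePoly
  simp only [factor_embed]
  by_cases h : x = u
  · simp [h]
  · obtain ⟨i, hi⟩ := Function.ne_iff.mp h
    rw [if_neg h]
    exact Finset.prod_eq_zero (Finset.mem_univ i) (by simp [hi])

lemma prod_erase_embed {n : ℕ} (x u : Fin n → ZMod 2) (j : Fin n) :
    (∏ i ∈ univ.erase j, if x i = 1 then embed u i else 1 - embed u i)
      = if ∀ i, i ≠ j → x i = u i then 1 else 0 := by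
  simp only [factor_embed]
  by_cases h : ∀ i, i ≠ j → x i = u i
  · rw [if_pos h]
    apply Finset.prod_eq_one
    intro i hi
    rw [if_pos (h i (Finset.mem_erase.mp hi).1)]
  · rw [if_neg h]
    push_neg at h
    obtain ⟨i, hij, hi⟩ := h
    exact Finset.prod_eq_zero (Finset.mem_erase.mpr ⟨hij, Finset.mem_univ i⟩) (by simp [hi])

/-- The explicit Fréchet derivative of `codePoly x` at `u`. -/
noncomputable def codePolyD {n : ℕ} (x : Fin n → ZMod 2) (u : Fin n → ℝ) :
    (Fin n → ℝ) →L[ℝ] ℝ :=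
  ∑ i, (∏ j ∈ univ.erase i, (if x j = 1 then u j else 1 - u j)) •
    ((if x i = 1 then (1:ℝ) else -1) •
      (ContinuousLinearMap.proj i : (Fin n → ℝ) →L[ℝ] ℝ))

lemma hasFDerivAt_codePoly {n : ℕ} (x : Fin n → ZMod 2) (u : Fin n → ℝ) :
    HasFDerivAt (codePoly x) (codePolyD x u) u := by
  have h : ∀ i ∈ (univ : Finset (Fin n)), HasFDerivAt
      (fun v : Fin n → ℝ => if x i = 1 then v i else 1 - v i)
      ((if x i = 1 then (1:ℝ) else -1) •
        (ContinuousLinearMap.proj i : (Fin n → ℝ) →L[ℝ] ℝ)) u := by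
    intro i _
    by_cases hx : x i = 1
    · simpa [hx] using hasFDerivAt_apply (𝕜 := ℝ) i u
    · simp only [if_neg hx]
      have h2 := ((ContinuousLinearMap.proj i :
        (Fin n → ℝ) →L[ℝ] ℝ).hasFDerivAt (x := u)).const_sub 1
      have e2 : ((-1 : ℝ) • (ContinuousLinearMap.proj i : (Fin n → ℝ) →L[ℝ] ℝ))
          = -(ContinuousLinearMap.proj i : (Fin n → ℝ) →L[ℝ] ℝ) := by
        ext w; simp
      rw [e2]
      exact h2
  exact HasFDerivAt.finset_prod h

lemma codePolyD_apply_single {n : ℕ} (x u : Fin n → ZMod 2) (j : Fin n) :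
    codePolyD x (embed u) (Pi.single j 1)
      = (if ∀ i, i ≠ j → x i = u i then 1 else 0) * (if x j = 1 then (1:ℝ) else -1) := by
  unfold codePolyD
  rw [ContinuousLinearMap.sum_apply]
  rw [Finset.sum_eq_single j]
  · simp only [ContinuousLinearMap.smul_apply, ContinuousLinearMap.proj_apply,
      Pi.single_eq_same, smul_eq_mul, mul_one, prod_erase_embed]
  · intro i _ hij
    split_ifs <;>
      simp [ContinuousLinearMap.smul_apply, ContinuousLinearMap.proj_apply,
        Pi.single_eq_of_ne hij]
  · intro h; exact absurd (Finset.mem_univ j) h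

lemma sub_mem_code {k n : ℕ} (G : Matrix (Fin k) (Fin n) (ZMod 2))
    {x y : Fin n → ZMod 2} (hx : x ∈ code G) (hy : y ∈ code G) :
    x - y ∈ code G := by
  simp only [code, Finset.mem_image] at *
  obtain ⟨m, -, rfl⟩ := hx
  obtain ⟨m', -, rfl⟩ := hy
  exact ⟨m - m', Finset.mem_univ _, Matrix.sub_vecMul G m m'⟩

/-- Under the weight hypothesis, two distinct codewords never agree off a single
coordinate. -/
lemma not_agree_off {k n : ℕ} (G : Matrix (Fin k) (Fin n) (ZMod 2))
    (hwt : ∀ x ∈ code G, (Finset.univ.filter (fun i : Fin n => x i ≠ 0)).card ≠ 1)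
    {x u : Fin n → ZMod 2} (hx : x ∈ code G) (hu : u ∈ code G) (hne : x ≠ u)
    (j : Fin n) : ¬ (∀ i, i ≠ j → x i = u i) := by
  intro h
  have hy : x - u ∈ code G := sub_mem_code G hx hu
  have hj : (x - u) j ≠ 0 := by
    intro h0
    apply hne
    funext i
    by_cases hij : i = j
    · subst hij
      have : x i - u i = 0 := h0
      linear_combination (this : x i - u i = 0)
    · exact h i hij
  have hfil : (Finset.univ.filter (fun i : Fin n => (x - u) i ≠ 0)) = {j} := by
    apply Finset.eq_singleton_iff_unique_mem.mpr
    constructor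
    · exact Finset.mem_filter.mpr ⟨Finset.mem_univ j, hj⟩
    · intro i hi
      rw [Finset.mem_filter] at hi
      by_contra hij
      exact hi.2 (by simp [Pi.sub_apply, h i hij])
  exact hwt _ hy (by rw [hfil]; simp)

lemma hasFDerivAt_Hfun {k n : ℕ} (G : Matrix (Fin k) (Fin n) (ZMod 2)) (v : Fin n → ℝ) :
    HasFDerivAt (Hfun G) (∑ x ∈ code G, codePolyD x v) v := by
  exact HasFDerivAt.fun_sum fun x _ => hasFDerivAt_codePoly x v

lemma hasFDerivAt_Ifun {k n : ℕ} (G : Matrix (Fin k) (Fin n) (ZMod 2)) (i : Fin n)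
    (v : Fin n → ℝ) :
    HasFDerivAt (Ifun G i)
      (∑ x ∈ (code G).filter (fun x => x i = 1), codePolyD x v) v := by
  exact HasFDerivAt.fun_sum fun x _ => hasFDerivAt_codePoly x v

/-- If the code contains no codeword of Hamming weight 1, then at every codeword `u ∈ C`
(identified with a 0/1 point of `ℝ^n`) one has `H(u) = 1` and the Jacobian matrix of the
rational map `f` is the zero matrix: `∂f_i/∂u_j(u) = 0` for all `i, j`. -/
theorem stmt5 {k n : ℕ} (hk : 0 < k) (hkn : k ≤ n)
    (G : Matrix (Fin k) (Fin n) (ZMod 2))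
    (hrank : G.rank = k) (hcols : ∀ i : Fin n, Gᵀ i ≠ 0)
    (hwt : ∀ x ∈ code G, (Finset.univ.filter (fun i : Fin n => x i ≠ 0)).card ≠ 1)
    (u : Fin n → ZMod 2) (hu : u ∈ code G) :
    Hfun G (embed u) = 1 ∧
    ∀ i j : Fin n, fderiv ℝ (fmap G i) (embed u) (Pi.single j 1) = 0 := by
  have hH1 : Hfun G (embed u) = 1 := by
    unfold Hfun
    simp only [codePoly_embed]
    rw [Finset.sum_ite_eq' (code G) u (fun _ => (1:ℝ))]
    simp [hu]
  refine ⟨hH1, ?_⟩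
  intro i j
  -- value of Ifun at embed u
  have hIval : Ifun G i (embed u) = if u i = 1 then 1 else 0 := by
    unfold Ifun
    simp only [codePoly_embed]
    rw [Finset.sum_ite_eq' _ u (fun _ => (1:ℝ))]
    by_cases h : u i = 1
    · simp [Finset.mem_filter, hu, h]
    · simp [Finset.mem_filter, h]
  -- the derivative evaluations
  have hDval : ∀ x ∈ code G, x ≠ u →
      codePolyD x (embed u) (Pi.single j 1) = 0 := by
    intro x hx hne
    rw [codePolyD_apply_single, if_neg (not_agree_off G hwt hx hu hne j), zero_mul]
  have hDu : codePolyD u (embed u) (Pi.single j 1) = (if u j = 1 then (1:ℝ) else -1) := by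
    rw [codePolyD_apply_single, if_pos (fun i _ => rfl), one_mul]
  have hHder : (∑ x ∈ code G, codePolyD x (embed u)) (Pi.single j 1)
      = (if u j = 1 then (1:ℝ) else -1) := by
    rw [ContinuousLinearMap.sum_apply]
    rw [Finset.sum_eq_single_of_mem u hu (fun x hx hne => hDval x hx hne)]
    exact hDu
  have hIder : (∑ x ∈ (code G).filter (fun x => x i = 1), codePolyD x (embed u))
      (Pi.single j 1) = if u i = 1 then (if u j = 1 then (1:ℝ) else -1) else 0 := by
    rw [ContinuousLinearMap.sum_apply]
    by_cases h : u i = 1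
    · rw [if_pos h]
      rw [Finset.sum_eq_single_of_mem u (Finset.mem_filter.mpr ⟨hu, h⟩)
        (fun x hx hne => hDval x (Finset.mem_filter.mp hx).1 hne)]
      exact hDu
    · rw [if_neg h]
      apply Finset.sum_eq_zero
      intro x hx
      have hx' := Finset.mem_filter.mp hx
      have hne : x ≠ u := by
        intro he; exact h (he ▸ hx'.2)
      exact hDval x hx'.1 hne
  -- assemble the derivative of fmap
  have hHne : Hfun G (embed u) ≠ 0 := by rw [hH1]; norm_num
  have hinv : HasFDerivAt (fun v => (Hfun G v)⁻¹)
      ((ContinuousLinearMap.smulRight (1 : ℝ →L[ℝ] ℝ)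
        (-(Hfun G (embed u) ^ 2)⁻¹)).comp (∑ x ∈ code G, codePolyD x (embed u)))
      (embed u) :=
    (hasFDerivAt_inv hHne).comp (embed u) (hasFDerivAt_Hfun G (embed u))
  have hmul := (hasFDerivAt_Ifun G i (embed u)).mul hinv
  have hfm : HasFDerivAt (fmap G i)
      (Ifun G i (embed u) • ((ContinuousLinearMap.smulRight (1 : ℝ →L[ℝ] ℝ)
        (-(Hfun G (embed u) ^ 2)⁻¹)).comp (∑ x ∈ code G, codePolyD x (embed u))) +
        (Hfun G (embed u))⁻¹ •
          (∑ x ∈ (code G).filter (fun x => x i = 1), codePolyD x (embed u)))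
      (embed u) := by
    have : fmap G i = fun v => Ifun G i v * (Hfun G v)⁻¹ := by
      funext v; rw [fmap, div_eq_mul_inv]
    rw [this]
    exact hmul
  rw [hfm.fderiv]
  simp only [ContinuousLinearMap.add_apply, ContinuousLinearMap.smul_apply,
    ContinuousLinearMap.comp_apply, ContinuousLinearMap.smulRight_apply,
    ContinuousLinearMap.one_apply, hHder, hIder, hIval, hH1, smul_eq_mul]
  by_cases h : u i = 1 <;> by_cases h' : u j = 1 <;> simp [h, h'] <;> ring
end

section
/- Let l ≥ 2 and i_1,…,i_l ∈ {1,…,n}. The mixed partial derivative ∂^l H/∂u_{i_1}⋯∂u_{i_l}(p) equals 0 if either some index is repeated among i_1,…,i_l, or the indices are distinct and g_{i_1} + ⋯ + g_{i_l} ≠ 0 in 𝔽₂^k. If the indices are distinct and g_{i_1} + ⋯ + g_{i_l} = 0, then ∂^l H/∂u_{i_1}⋯∂u_{i_l}(p) = (−1)^l · 2^{−n+k+l}. -/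
open Matrix Finset

noncomputable section Stmt13Aux

variable {n : ℕ}

/-- monomial `∏_{i∈S} (1/2 - u i)` -/
def mono (S : Finset (Fin n)) (u : Fin n → ℝ) : ℝ := ∏ i ∈ S, (1/2 - u i)

lemma contDiff_mono (S : Finset (Fin n)) : ContDiff ℝ ⊤ (mono S) := by
  apply contDiff_prod
  intro i _
  exact contDiff_const.sub ((ContinuousLinearMap.proj i : (Fin n → ℝ) →L[ℝ] ℝ).contDiff)

lemma fderiv_mono (S : Finset (Fin n)) (u : Fin n → ℝ) (j : Fin n) :
    fderiv ℝ (mono S) u (Pi.single j 1) =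
      if j ∈ S then -(mono (S.erase j) u) else 0 := by
  have hd : ∀ i ∈ S, HasFDerivAt (fun u : Fin n → ℝ => 1/2 - u i)
      (0 - (ContinuousLinearMap.proj i : (Fin n → ℝ) →L[ℝ] ℝ)) u :=
    fun i _ => (hasFDerivAt_const _ _).sub (hasFDerivAt_apply i u)
  have := (HasFDerivAt.finset_prod hd).fderiv
  rw [show (fun x : Fin n → ℝ => ∏ i ∈ S, (1/2 - x i)) = mono S from rfl] at this
  rw [this]
  simp only [ContinuousLinearMap.sum_apply, ContinuousLinearMap.smul_apply,
    ContinuousLinearMap.sub_apply, ContinuousLinearMap.zero_apply,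
    ContinuousLinearMap.proj_apply, smul_eq_mul]
  by_cases hj : j ∈ S
  · rw [Finset.sum_eq_single_of_mem j hj]
    · simp [hj, mono, Pi.single_eq_same]
    · intro i _ hij
      rw [Pi.single_eq_of_ne hij]
      simp
  · rw [if_neg hj, Finset.sum_eq_zero]
    intro i hi
    rw [Pi.single_eq_of_ne (by rintro rfl; exact hj hi)]
    simp

lemma fin_exists_castSucc {l : ℕ} (P : Fin (l+1) → Prop) :
    (∃ t, P t) ↔ (∃ t : Fin l, P t.castSucc) ∨ P (Fin.last l) := by
  constructor
  · rintro ⟨t, ht⟩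
    rcases Fin.eq_castSucc_or_eq_last t with ⟨s, rfl⟩ | rfl
    · exact Or.inl ⟨s, ht⟩
    · exact Or.inr ht
  · rintro (⟨t, ht⟩ | h)
    exacts [⟨t.castSucc, ht⟩, ⟨_, h⟩]

lemma iter_succ_right {l : ℕ} (f : (Fin n → ℝ) → ℝ) (hf : ContDiff ℝ ⊤ f)
    (x : Fin n → ℝ) (m : Fin (l+1) → (Fin n → ℝ)) :
    iteratedFDeriv ℝ (l+1) f x m =
      iteratedFDeriv ℝ l (fun y => fderiv ℝ f y (m (Fin.last l))) x (Fin.init m) := by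
  rw [iteratedFDeriv_succ_apply_right,
    ← iteratedFDeriv_clm_apply_const_apply (hf.fderiv_right le_top) le_top]

lemma iteratedFDeriv_mono (l : ℕ) (S : Finset (Fin n)) (idx : Fin l → Fin n) (u : Fin n → ℝ) :
    iteratedFDeriv ℝ l (mono S) u (fun t => Pi.single (idx t) 1) =
      if Function.Injective idx ∧ ∀ t, idx t ∈ S then
        (-1 : ℝ)^l * mono (S \ Finset.image idx Finset.univ) u else 0 := by
  induction l generalizing S with
  | zero =>
    rw [iteratedFDeriv_zero_apply,
      if_pos ⟨Function.injective_of_subsingleton idx, fun t => t.elim0⟩]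
    simp [Finset.univ_eq_empty]
  | succ l IH =>
    rw [iter_succ_right _ (contDiff_mono S)]
    set j := idx (Fin.last l) with hjdef
    have hfd : (fun y => fderiv ℝ (mono S) y (Pi.single j (1:ℝ))) =
        (fun y => if j ∈ S then -(mono (S.erase j) y) else 0) := by
      funext y; exact fderiv_mono S y j
    rw [hfd]
    have hinit : Fin.init (fun t : Fin (l+1) => (Pi.single (idx t) (1:ℝ) : Fin n → ℝ)) =
        fun t : Fin l => Pi.single (idx t.castSucc) (1:ℝ) := by
      funext t; simp [Fin.init]
    rw [hinit]
    by_cases hj : j ∈ S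
    · simp only [if_pos hj]
      rw [show (fun y => -(mono (S.erase j) y)) = -(mono (S.erase j)) from rfl,
        iteratedFDeriv_neg_apply, ContinuousMultilinearMap.neg_apply,
        IH (S.erase j) (fun t => idx t.castSucc)]
      by_cases hcond : Function.Injective idx ∧ ∀ t, idx t ∈ S
      · have htail : Function.Injective (fun t : Fin l => idx t.castSucc) :=
          hcond.1.comp (Fin.castSucc_injective l)
        have hmem : ∀ t : Fin l, idx t.castSucc ∈ S.erase j := by
          intro t
          refine Finset.mem_erase.mpr ⟨?_, hcond.2 _⟩
          intro h
          exact absurd (hcond.1 h) (Fin.castSucc_lt_last t).ne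
        rw [if_pos ⟨htail, hmem⟩, if_pos hcond]
        have hset : S.erase j \ Finset.image (fun t : Fin l => idx t.castSucc) Finset.univ =
            S \ Finset.image idx Finset.univ := by
          ext i
          simp only [Finset.mem_sdiff, Finset.mem_erase, Finset.mem_image,
            Finset.mem_univ, true_and]
          rw [fin_exists_castSucc (fun t => idx t = i)]
          constructor
          · rintro ⟨⟨hij, hiS⟩, hne⟩
            exact ⟨hiS, fun h => h.elim hne (fun h' => hij h'.symm)⟩
          · rintro ⟨hiS, hne⟩
            exact ⟨⟨fun h => hne (Or.inr (h ▸ rfl)), hiS⟩, fun h => hne (Or.inl h)⟩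
        rw [hset]
        ring
      · rw [if_neg hcond, if_neg, neg_zero]
        rintro ⟨htail, hmem⟩
        refine hcond ⟨?_, ?_⟩
        · intro a b hab
          rcases Fin.eq_castSucc_or_eq_last a with ⟨s, rfl⟩ | rfl <;>
            rcases Fin.eq_castSucc_or_eq_last b with ⟨t, rfl⟩ | rfl
          · rw [htail hab]
          · exact absurd hab (Finset.mem_erase.mp (hmem s)).1
          · exact absurd hab.symm (Finset.mem_erase.mp (hmem t)).1
          · rfl
        · intro t
          rcases Fin.eq_castSucc_or_eq_last t with ⟨s, rfl⟩ | rfl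
          · exact (Finset.mem_erase.mp (hmem s)).2
          · exact hj
    · simp only [if_neg hj]
      rw [iteratedFDeriv_zero_fun]
      rw [if_neg (fun h => hj (h.2 (Fin.last l)))]
      simp

/-- the character `ZMod 2 → ℝ` -/
def eps (c : ZMod 2) : ℝ := if c = 1 then -1 else 1

lemma zmod2_cases (c : ZMod 2) : c = 0 ∨ c = 1 := by revert c; decide

lemma eps_zero : eps 0 = 1 := by norm_num [eps]

lemma eps_one : eps 1 = -1 := by norm_num [eps]

lemma eps_add (a b : ZMod 2) : eps (a + b) = eps a * eps b := by
  rcases zmod2_cases a with rfl | rfl <;> rcases zmod2_cases b with rfl | rfl <;>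
    norm_num [eps, show (1:ZMod 2)+1 = 0 from rfl] <;> decide

lemma eps_prod {ι : Type*} (S : Finset ι) (x : ι → ZMod 2) :
    ∏ i ∈ S, eps (x i) = eps (∑ i ∈ S, x i) := by
  induction S using Finset.cons_induction with
  | empty => simp [eps_zero]
  | cons a s ha IH => rw [Finset.prod_cons, Finset.sum_cons, eps_add, IH]

lemma eps_sum_univ {k : ℕ} (c : Fin k → ZMod 2) :
    ∑ m : Fin k → ZMod 2, eps (∑ j, m j * c j) = if c = 0 then (2:ℝ)^k else 0 := by
  have h1 : ∀ m : Fin k → ZMod 2, eps (∑ j, m j * c j) = ∏ j, eps (m j * c j) := by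
    intro m; rw [eps_prod]
  simp_rw [h1]
  rw [← Fintype.prod_sum (fun j (a : ZMod 2) => eps (a * c j))]
  have h2 : ∀ j, ∑ a : ZMod 2, eps (a * c j) = if c j = 0 then (2:ℝ) else 0 := by
    intro j
    rw [show (univ : Finset (ZMod 2)) = {0, 1} from by decide,
      Finset.sum_insert (by decide), Finset.sum_singleton]
    rcases zmod2_cases (c j) with h | h <;> rw [h] <;>
      norm_num [eps_zero, eps_one]
  simp_rw [h2]
  by_cases hc : c = 0
  · subst hc; simp
  · rw [if_neg hc]
    obtain ⟨j, hj⟩ : ∃ j, c j ≠ 0 := by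
      by_contra h
      push_neg at h
      exact hc (funext h)
    exact Finset.prod_eq_zero (Finset.mem_univ j) (if_neg hj)

lemma codePoly_eps (x : Fin n → ZMod 2) (u : Fin n → ℝ) :
    codePoly x u = ∏ i, (eps (x i) * (1/2 - u i) + 1/2) := by
  refine Finset.prod_congr rfl fun i _ => ?_
  rcases zmod2_cases (x i) with h | h <;> rw [h] <;>
    norm_num [eps_zero, eps_one] <;> ring

lemma Hfun_decomp {k n : ℕ} (G : Matrix (Fin k) (Fin n) (ZMod 2)) (hrank : G.rank = k) :
    Hfun G = fun u => ∑ S ∈ Finset.univ.filter (fun S : Finset (Fin n) => ∑ i ∈ S, Gᵀ i = 0),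
      ((2:ℝ)^k * (1/2:ℝ)^(n - S.card)) * mono S u := by
  classical
  have hinj : Function.Injective (fun m : Fin k → ZMod 2 => Matrix.vecMul m G) := by
    have h1 : Gᵀ.rank = k := by rw [Matrix.rank_transpose, hrank]
    have h2 := LinearMap.finrank_range_add_finrank_ker (Gᵀ.mulVecLin)
    rw [Matrix.rank] at h1
    rw [h1, Module.finrank_pi, Fintype.card_fin] at h2
    have h3 : LinearMap.ker (Gᵀ.mulVecLin) = ⊥ := by
      rw [← Submodule.finrank_eq_zero (R := ZMod 2)]
      omega
    have h4 := LinearMap.ker_eq_bot.mp h3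
    intro a b hab
    apply h4
    have : Gᵀ.mulVecLin a = Gᵀ.mulVecLin b := by
      simp only [Matrix.mulVecLin_apply, Matrix.mulVec_transpose]
      exact hab
    exact this
  funext u
  rw [Hfun, code, Finset.sum_image (fun a _ b _ h => hinj h)]
  calc
    ∑ m : Fin k → ZMod 2, codePoly (Matrix.vecMul m G) u
      = ∑ m : Fin k → ZMod 2, ∑ S : Finset (Fin n),
          (∏ i ∈ S, eps (Matrix.vecMul m G i)) * (mono S u * (1/2:ℝ)^(n - S.card)) := by
        refine Finset.sum_congr rfl fun m _ => ?_
        rw [codePoly_eps, Fintype.prod_add]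
        refine Finset.sum_congr rfl fun S _ => ?_
        rw [Finset.prod_mul_distrib, Finset.prod_const, Finset.card_compl, Fintype.card_fin]
        rw [mono]
        ring
    _ = ∑ S : Finset (Fin n),
          (∑ m : Fin k → ZMod 2, ∏ i ∈ S, eps (Matrix.vecMul m G i)) *
            (mono S u * (1/2:ℝ)^(n - S.card)) := by
        rw [Finset.sum_comm]
        refine Finset.sum_congr rfl fun S _ => ?_
        rw [Finset.sum_mul]
    _ = ∑ S : Finset (Fin n),
          (if (∑ i ∈ S, Gᵀ i) = 0 then (2:ℝ)^k else 0) *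
            (mono S u * (1/2:ℝ)^(n - S.card)) := by
        refine Finset.sum_congr rfl fun S _ => ?_
        congr 1
        have hprod : ∀ m : Fin k → ZMod 2,
            ∏ i ∈ S, eps (Matrix.vecMul m G i) = eps (∑ j, m j * (∑ i ∈ S, Gᵀ i) j) := by
          intro m
          rw [eps_prod]
          congr 1
          have : ∀ i, Matrix.vecMul m G i = ∑ j, m j * G j i := fun i => rfl
          have h2 : ∀ j, (∑ i ∈ S, Gᵀ i) j = ∑ i ∈ S, G j i := fun j => by
            exact Finset.sum_apply (g := fun i => (Gᵀ i : Fin k → ZMod 2)) j S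
          simp_rw [this, h2]
          rw [Finset.sum_comm]
          refine Finset.sum_congr rfl fun j _ => ?_
          rw [Finset.mul_sum]
        simp_rw [hprod]
        rw [eps_sum_univ (∑ i ∈ S, Gᵀ i)]
    _ = _ := by
        rw [Finset.sum_filter]
        refine Finset.sum_congr rfl fun S _ => ?_
        by_cases h : (∑ i ∈ S, Gᵀ i) = 0 <;> simp [h] <;> ring
end Stmt13Aux

/-- Classification of the mixed partial derivatives `∂^l H/∂u_{i_1}⋯∂u_{i_l}(p)` (`l ≥ 2`):
it vanishes when some index is repeated, or when the indices are distinct and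
`g_{i_1} + ⋯ + g_{i_l} ≠ 0`; when the indices are distinct and `g_{i_1} + ⋯ + g_{i_l} = 0`
it equals `(-1)^l 2^(-n+k+l)`. -/
theorem stmt13 {k n : ℕ} (hk : 0 < k) (hkn : k ≤ n)
    (G : Matrix (Fin k) (Fin n) (ZMod 2))
    (hrank : G.rank = k) (hcols : ∀ i : Fin n, Gᵀ i ≠ 0)
    (l : ℕ) (hl : 2 ≤ l) (idx : Fin l → Fin n) :
    (¬ Function.Injective idx →
      iteratedFDeriv ℝ l (Hfun G) (pcenter n) (fun t => Pi.single (idx t) (1:ℝ)) = 0) ∧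
    (Function.Injective idx → (∑ t, Gᵀ (idx t)) ≠ 0 →
      iteratedFDeriv ℝ l (Hfun G) (pcenter n) (fun t => Pi.single (idx t) (1:ℝ)) = 0) ∧
    (Function.Injective idx → (∑ t, Gᵀ (idx t)) = 0 →
      iteratedFDeriv ℝ l (Hfun G) (pcenter n) (fun t => Pi.single (idx t) (1:ℝ)) =
        (-1 : ℝ) ^ l * (2 : ℝ) ^ (-(n : ℤ) + (k : ℤ) + (l : ℤ))) := by
  classical
  set 𝒯 := Finset.univ.filter (fun S : Finset (Fin n) => ∑ i ∈ S, Gᵀ i = 0) with h𝒯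
  have key : iteratedFDeriv ℝ l (Hfun G) (pcenter n) (fun t => Pi.single (idx t) (1:ℝ)) =
      ∑ S ∈ 𝒯, ((2:ℝ)^k * (1/2:ℝ)^(n - S.card)) *
        (if Function.Injective idx ∧ ∀ t, idx t ∈ S then
          (-1:ℝ)^l * mono (S \ Finset.image idx Finset.univ) (pcenter n) else 0) := by
    rw [Hfun_decomp G hrank, iteratedFDeriv_sum
      (f := fun (S : Finset (Fin n)) (u : Fin n → ℝ) =>
        ((2:ℝ)^k * (1/2:ℝ)^(n - S.card)) * mono S u)
      (fun S _ => (((contDiff_mono S).const_smul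
        ((2:ℝ)^k * (1/2:ℝ)^(n - S.card))).of_le le_top))]
    rw [Finset.sum_apply, ContinuousMultilinearMap.sum_apply]
    refine Finset.sum_congr rfl fun S _ => ?_
    have hsmul : (fun u => ((2:ℝ)^k * (1/2:ℝ)^(n - S.card)) * mono S u) =
        ((2:ℝ)^k * (1/2:ℝ)^(n - S.card)) • mono S := rfl
    rw [hsmul, iteratedFDeriv_const_smul_apply ((contDiff_mono S).of_le le_top).contDiffAt,
      ContinuousMultilinearMap.smul_apply, iteratedFDeriv_mono l S idx (pcenter n),
      smul_eq_mul]
  have hmono_pc : ∀ S : Finset (Fin n), S.Nonempty → mono S (pcenter n) = 0 := by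
    intro S ⟨i, hi⟩
    refine Finset.prod_eq_zero hi ?_
    show (1/2 : ℝ) - pcenter n i = 0
    simp [pcenter]
  refine ⟨?_, ?_, ?_⟩
  · intro hninj
    rw [key, Finset.sum_eq_zero]
    intro S _
    rw [if_neg (fun h => hninj h.1), mul_zero]
  · intro hinj hsum
    rw [key, Finset.sum_eq_zero]
    intro S hS
    by_cases hc : Function.Injective idx ∧ ∀ t, idx t ∈ S
    · rw [if_pos hc]
      have himg : Finset.image idx Finset.univ ⊆ S := by
        intro i hi
        obtain ⟨t, _, rfl⟩ := Finset.mem_image.mp hi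
        exact hc.2 t
      have hne : S ≠ Finset.image idx Finset.univ := by
        rintro rfl
        apply hsum
        exact (Finset.sum_image (f := fun i => (Gᵀ i : Fin k → ZMod 2))
          (fun a _ b _ h => hinj h)).symm.trans (Finset.mem_filter.mp hS).2
      have hnonempty : (S \ Finset.image idx Finset.univ).Nonempty := by
        rw [Finset.sdiff_nonempty]
        intro hsub
        exact hne (Finset.Subset.antisymm hsub himg)
      rw [hmono_pc _ hnonempty, mul_zero, mul_zero]
    · rw [if_neg hc, mul_zero]
  · intro hinj hsum
    have hln : l ≤ n := by
      have := Fintype.card_le_of_injective idx hinj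
      simpa using this
    rw [key, Finset.sum_eq_single_of_mem (Finset.image idx Finset.univ)]
    · have hcard : (Finset.image idx Finset.univ).card = l := by
        rw [Finset.card_image_of_injective _ hinj, Finset.card_univ, Fintype.card_fin]
      rw [if_pos ⟨hinj, fun t => Finset.mem_image.mpr ⟨t, Finset.mem_univ t, rfl⟩⟩]
      rw [Finset.sdiff_self, show mono (∅ : Finset (Fin n)) (pcenter n) = 1 from
        Finset.prod_empty, mul_one, hcard]
      have h2 : ((2:ℝ)^k * (1/2:ℝ)^(n - l)) = (2:ℝ) ^ (-(n : ℤ) + (k : ℤ) + (l : ℤ)) := by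
        rw [one_div, inv_pow, ← zpow_natCast (2:ℝ) k, ← zpow_natCast (2:ℝ) (n-l),
          ← _root_.zpow_neg, ← zpow_add₀ (two_ne_zero)]
        congr 1
        omega
      rw [h2]
      ring
    · rw [h𝒯, Finset.mem_filter]
      refine ⟨Finset.mem_univ _, ?_⟩
      exact (Finset.sum_image (f := fun i => (Gᵀ i : Fin k → ZMod 2))
        (fun a _ b _ h => hinj h)).trans hsum
    · intro S hS hne
      by_cases hc : Function.Injective idx ∧ ∀ t, idx t ∈ S
      · rw [if_pos hc]
        have himg : Finset.image idx Finset.univ ⊆ S := by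
          intro i hi
          obtain ⟨t, _, rfl⟩ := Finset.mem_image.mp hi
          exact hc.2 t
        have hnonempty : (S \ Finset.image idx Finset.univ).Nonempty := by
          rw [Finset.sdiff_nonempty]
          intro hsub
          exact hne (Finset.Subset.antisymm hsub himg)
        rw [hmono_pc _ hnonempty, mul_zero, mul_zero]
      · rw [if_neg hc, mul_zero]
end

section
/- Let l ≥ 2 and i, i_1,…,i_l ∈ {1,…,n}. The mixed partial derivative ∂^l I_i/∂u_{i_1}⋯∂u_{i_l}(p) is classified as follows: it equals 0 if some index is repeated among i_1,…,i_l (condition C0), or if the indices i_1,…,i_l are distinct and g_{i_1} + ⋯ + g_{i_l} is neither 0 nor g_i (condition C1); it equals (−1)^{l+1} · 2^{−n+k+l−1} if the indices i_1,…,i_l are distinct and g_{i_1} + ⋯ + g_{i_l} = g_i (condition C2); and it equals (−1)^l · 2^{−n+k+l−1} if the indices i_1,…,i_l are distinct and g_{i_1} + ⋯ + g_{i_l} = 0 (condition C3). -/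
open Matrix Finset

noncomputable def Pfun {n : ℕ} (S : Finset (Fin n)) (x : Fin n → ZMod 2) (u : Fin n → ℝ) : ℝ :=
  ∏ j ∈ S, (if x j = 1 then u j else 1 - u j)

lemma contDiff_factor {n : ℕ} (x : Fin n → ZMod 2) (j : Fin n) {m : WithTop ℕ∞} :
    ContDiff ℝ m (fun u : Fin n → ℝ => if x j = 1 then u j else 1 - u j) := by
  by_cases h : x j = 1
  · simp only [h, if_true]; exact (ContinuousLinearMap.proj (R := ℝ) (φ := fun _ : Fin n => ℝ) j).contDiff
  · simpa [h] using contDiff_const.sub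
      (ContinuousLinearMap.proj (R := ℝ) (φ := fun _ : Fin n => ℝ) j).contDiff

lemma contDiff_Pfun {n : ℕ} (S : Finset (Fin n)) (x : Fin n → ZMod 2) {m : WithTop ℕ∞} :
    ContDiff ℝ m (Pfun S x) :=
  contDiff_prod fun j _ => contDiff_factor x j

lemma hasFDerivAt_factor {n : ℕ} (x : Fin n → ZMod 2) (j : Fin n) (u : Fin n → ℝ) :
    HasFDerivAt (fun u : Fin n → ℝ => if x j = 1 then u j else 1 - u j)
      ((if x j = 1 then (1:ℝ) else -1) • (ContinuousLinearMap.proj j :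
        (Fin n → ℝ) →L[ℝ] ℝ)) u := by
  by_cases h : x j = 1
  · simp only [h, if_true, one_smul]; exact (ContinuousLinearMap.proj (R := ℝ) (φ := fun _ : Fin n => ℝ) j).hasFDerivAt
  · have := (hasFDerivAt_const (1:ℝ) u).sub
      ((ContinuousLinearMap.proj (R := ℝ) (φ := fun _ : Fin n => ℝ) j).hasFDerivAt (x := u))
    simp only [h, if_false]
    refine this.congr_fderiv ?_
    ext v
    simp

lemma fderiv_Pfun_apply {n : ℕ} (S : Finset (Fin n)) (x : Fin n → ZMod 2) (j : Fin n)
    (u : Fin n → ℝ) :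
    fderiv ℝ (Pfun S x) u (Pi.single j (1:ℝ)) =
      if j ∈ S then (if x j = 1 then (1:ℝ) else -1) * Pfun (S.erase j) x u else 0 := by
  classical
  have hd : fderiv ℝ (Pfun S x) u = ∑ a ∈ S,
      (∏ b ∈ S.erase a, (if x b = 1 then u b else 1 - u b)) •
        ((if x a = 1 then (1:ℝ) else -1) • (ContinuousLinearMap.proj a :
          (Fin n → ℝ) →L[ℝ] ℝ)) :=
    (HasFDerivAt.finset_prod fun a _ => hasFDerivAt_factor x a u).fderiv
  rw [hd]
  simp only [ContinuousLinearMap.sum_apply, ContinuousLinearMap.smul_apply,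
    ContinuousLinearMap.proj_apply, smul_eq_mul]
  have key : ∀ a ∈ S,
      (∏ b ∈ S.erase a, (if x b = 1 then u b else 1 - u b)) *
        ((if x a = 1 then (1:ℝ) else -1) * (Pi.single j (1:ℝ) : Fin n → ℝ) a) =
      if a = j then (if x j = 1 then (1:ℝ) else -1) * Pfun (S.erase j) x u else 0 := by
    intro a _
    rcases eq_or_ne a j with rfl | hne
    · simp [Pfun, mul_comm]
    · simp [Pi.single_eq_of_ne hne, hne]
  rw [Finset.sum_congr rfl key, Finset.sum_ite_eq' S j]

lemma iter_snoc {n : ℕ} {f g : (Fin n → ℝ) → ℝ} (v : Fin n → ℝ) (hf : ContDiff ℝ ⊤ f)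
    (hg : ∀ u, fderiv ℝ f u v = g u) (l : ℕ) (x : Fin n → ℝ) (m : Fin l → (Fin n → ℝ)) :
    iteratedFDeriv ℝ (l + 1) f x (Fin.snoc m v) = iteratedFDeriv ℝ l g x m := by
  rw [iteratedFDeriv_succ_apply_right, Fin.init_snoc, Fin.snoc_last]
  have hgeq : g = (ContinuousLinearMap.apply ℝ ℝ v) ∘ (fderiv ℝ f) := by
    funext u; rw [← hg u]; rfl
  rw [hgeq, ContinuousLinearMap.iteratedFDeriv_comp_left _ (hf.fderiv_right le_top).contDiffAt le_top]
  rfl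

lemma iter_Pfun {n : ℕ} (x : Fin n → ZMod 2) :
    ∀ (l : ℕ) (idx : Fin l → Fin n) (S : Finset (Fin n)) (u : Fin n → ℝ),
      iteratedFDeriv ℝ l (Pfun S x) u (fun t => Pi.single (idx t) (1:ℝ)) =
      if Function.Injective idx ∧ ∀ t, idx t ∈ S then
        (∏ t, (if x (idx t) = 1 then (1:ℝ) else -1)) *
          Pfun (S \ Finset.image idx Finset.univ) x u
      else 0 := by
  intro l
  induction l with
  | zero =>
    intro idx S u
    have hinj : Function.Injective idx := fun a => a.elim0
    have : (Finset.image idx Finset.univ) = ∅ := by simp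
    rw [if_pos ⟨hinj, fun t => t.elim0⟩, iteratedFDeriv_zero_apply]
    simp [this]
  | succ l IH =>
    intro idx S u
    set j := idx (Fin.last l) with hj
    set idx' := fun t : Fin l => idx t.castSucc with hidx'
    have hm : (fun t : Fin (l+1) => Pi.single (idx t) (1:ℝ)) =
        Fin.snoc (α := fun _ => Fin n → ℝ) (fun t : Fin l => Pi.single (idx' t) (1:ℝ)) (Pi.single j (1:ℝ)) := by
      funext t
      refine Fin.lastCases ?_ ?_ t
      · simp [Fin.snoc_last, hj]
      · intro t; simp [Fin.snoc_castSucc, hidx']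
    rw [hm, iter_snoc (g := fun u => if j ∈ S then
        (if x j = 1 then (1:ℝ) else -1) * Pfun (S.erase j) x u else 0) _
        (contDiff_Pfun S x) (fun u => by rw [fderiv_Pfun_apply])]
    by_cases hjS : j ∈ S
    · simp only [if_pos hjS]
      have : (fun u => (if x j = 1 then (1:ℝ) else -1) * Pfun (S.erase j) x u) =
          (if x j = 1 then (1:ℝ) else -1) • Pfun (S.erase j) x := by
        funext u; simp [smul_eq_mul]
      rw [this, iteratedFDeriv_const_smul_apply (contDiff_Pfun _ x (m := (l : WithTop ℕ∞))).contDiffAt,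
        ContinuousMultilinearMap.smul_apply, IH idx' (S.erase j) u]
      by_cases hcond : Function.Injective idx ∧ ∀ t, idx t ∈ S
      · have hcond' : Function.Injective idx' ∧ ∀ t, idx' t ∈ S.erase j := by
          constructor
          · exact fun a b hab => Fin.castSucc_injective l (hcond.1 hab)
          · intro t
            refine Finset.mem_erase.2 ⟨fun h => ?_, hcond.2 _⟩
            exact absurd (hcond.1 h) (Fin.ne_of_lt (Fin.castSucc_lt_last t))
        rw [if_pos hcond, if_pos hcond']
        have himg : S \ Finset.image idx Finset.univ =
            (S.erase j) \ Finset.image idx' Finset.univ := by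
          ext a
          simp only [Finset.mem_sdiff, Finset.mem_image, Finset.mem_univ, true_and,
            Finset.mem_erase]
          constructor
          · rintro ⟨haS, hni⟩
            exact ⟨⟨fun h => hni ⟨Fin.last l, h ▸ rfl⟩, haS⟩,
              fun ⟨t, ht⟩ => hni ⟨t.castSucc, ht⟩⟩
          · rintro ⟨⟨hne, haS⟩, hni⟩
            refine ⟨haS, fun ⟨t, ht⟩ => ?_⟩
            refine Fin.lastCases ?_ ?_ t ht
            · intro h; exact hne h.symm
            · intro t h; exact hni ⟨t, h⟩
        rw [himg, smul_eq_mul, ← mul_assoc, Fin.prod_univ_castSucc]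
        simp only [hidx', hj]; ring
      · rw [if_neg hcond]
        by_cases hcond' : Function.Injective idx' ∧ ∀ t, idx' t ∈ S.erase j
        · exfalso
          apply hcond
          constructor
          · intro a b hab
            refine Fin.lastCases ?_ ?_ a hab
            · refine Fin.lastCases ?_ ?_ b
              · intro _; rfl
              · intro b hb
                exact absurd (hcond'.2 b) (by simp [hidx', ← hb, hj])
            · intro a ha
              refine Fin.lastCases ?_ ?_ b ha
              · intro ha'
                exact absurd (hcond'.2 a) (by simp [hidx', ha', hj])
              · intro b hb
                exact congrArg Fin.castSucc (hcond'.1 hb)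
          · intro t
            refine Fin.lastCases ?_ ?_ t
            · exact hjS
            · intro t; exact Finset.mem_of_mem_erase (hcond'.2 t)
        · rw [if_neg hcond', smul_zero]
    · simp only [if_neg hjS]
      rw [iteratedFDeriv_zero_fun]
      have : ¬ (Function.Injective idx ∧ ∀ t, idx t ∈ S) := by
        rintro ⟨_, h⟩; exact hjS (h (Fin.last l))
      rw [if_neg this]
      rfl

noncomputable def sgn (c : ZMod 2) : ℝ := if c = 0 then 1 else -1

lemma sgn_add (a b : ZMod 2) : sgn (a + b) = sgn a * sgn b := by
  have h : ∀ c : ZMod 2, c = 0 ∨ c = 1 := by decide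
  have h11 : (1 + 1 : ZMod 2) = 0 := by decide
  rcases h a with ha | ha <;> rcases h b with hb | hb <;>
    subst ha <;> subst hb <;> simp [sgn, h11] <;> norm_num

lemma sgn_sum {ι : Type*} (s : Finset ι) (f : ι → ZMod 2) :
    sgn (∑ t ∈ s, f t) = ∏ t ∈ s, sgn (f t) := by
  induction s using Finset.cons_induction with
  | empty => simp [sgn]
  | cons a s ha IH => rw [Finset.sum_cons, Finset.prod_cons, sgn_add, IH]

lemma sum_sgn {k : ℕ} (w : Fin k → ZMod 2) :
    ∑ m : Fin k → ZMod 2, sgn (∑ r, m r * w r) = if w = 0 then (2:ℝ)^k else 0 := by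
  have h1 : ∀ m : Fin k → ZMod 2, sgn (∑ r, m r * w r) = ∏ r, sgn (m r * w r) :=
    fun m => sgn_sum _ _
  simp_rw [h1]
  rw [← Fintype.prod_sum (f := fun r (c : ZMod 2) => sgn (c * w r))]
  have h2 : ∀ r : Fin k, ∑ c : ZMod 2, sgn (c * w r) = if w r = 0 then (2:ℝ) else 0 := by
    intro r
    have huniv : (Finset.univ : Finset (ZMod 2)) = {0, 1} := by decide
    rw [huniv, Finset.sum_pair (by decide : (0 : ZMod 2) ≠ 1)]
    have h : w r = 0 ∨ w r = 1 := by
      have := (by decide : ∀ c : ZMod 2, c = 0 ∨ c = 1); exact this _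
    rcases h with h | h <;> simp [h, sgn] <;> norm_num
  rw [Finset.prod_congr rfl fun r _ => h2 r]
  by_cases hw : w = 0
  · simp [hw]
  · rw [if_neg hw]
    obtain ⟨r, hr⟩ := Function.ne_iff.mp hw
    refine Finset.prod_eq_zero (Finset.mem_univ r) ?_
    simp only [Pi.zero_apply] at hr
    simp [hr]

lemma indicator_eq {c : ZMod 2} {y : ℝ} :
    (if c = 1 then y else 0) = (1 - sgn c) / 2 * y := by
  have h : c = 0 ∨ c = 1 := by
    have := (by decide : ∀ c : ZMod 2, c = 0 ∨ c = 1); exact this _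
  rcases h with h | h <;> simp [h, sgn] <;> norm_num

lemma vecMul_injective {k n : ℕ} (G : Matrix (Fin k) (Fin n) (ZMod 2)) (hrank : G.rank = k) :
    Function.Injective (fun m : Fin k → ZMod 2 => Matrix.vecMul m G) := by
  haveI : Fact (Nat.Prime 2) := ⟨Nat.prime_two⟩
  have h1 : (Gᵀ).rank = k := by rw [Matrix.rank_transpose]; exact hrank
  have h2 : LinearMap.ker (Gᵀ.mulVecLin) = ⊥ := by
    have h3 := LinearMap.finrank_range_add_finrank_ker (Gᵀ.mulVecLin)
    rw [Module.finrank_pi, Fintype.card_fin] at h3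
    have h4 : Module.finrank (ZMod 2) (LinearMap.range Gᵀ.mulVecLin) = k := h1
    rw [h4] at h3
    have h5 : Module.finrank (ZMod 2) (LinearMap.ker Gᵀ.mulVecLin) = 0 := by omega
    exact Submodule.finrank_eq_zero.mp h5
  intro a b hab
  have hab' : Gᵀ.mulVecLin a = Gᵀ.mulVecLin b := by
    simpa [Matrix.mulVecLin_apply, Matrix.mulVec_transpose] using hab
  exact LinearMap.ker_eq_bot.mp h2 hab'


lemma char_sum {k n : ℕ} (G : Matrix (Fin k) (Fin n) (ZMod 2)) (hrank : G.rank = k)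
    (i : Fin n) (l : ℕ) (idx : Fin l → Fin n) :
    ∑ x ∈ (code G).filter (fun x => x i = 1), ∏ t, (if x (idx t) = 1 then (1:ℝ) else -1) =
      (-1:ℝ)^l / 2 * ((if (∑ t, Gᵀ (idx t)) = 0 then (2:ℝ)^k else 0)
        - (if (∑ t, Gᵀ (idx t)) + Gᵀ i = 0 then (2:ℝ)^k else 0)) := by
  classical
  rw [Finset.sum_filter, code, Finset.sum_image
    (fun a _ b _ h => vecMul_injective G hrank h)]
  have hval : ∀ (m : Fin k → ZMod 2) (j : Fin n),
      Matrix.vecMul m G j = ∑ r, m r * G r j := by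
    intro m j; simp [Matrix.vecMul, dotProduct]
  have key : ∀ m : Fin k → ZMod 2,
      (if (Matrix.vecMul m G) i = 1 then
        ∏ t, (if (Matrix.vecMul m G) (idx t) = 1 then (1:ℝ) else -1) else 0)
      = (-1:ℝ)^l / 2 * (sgn (∑ r, m r * (∑ t, Gᵀ (idx t)) r)
          - sgn (∑ r, m r * ((∑ t, Gᵀ (idx t)) + Gᵀ i) r)) := by
    intro m
    have hsgn1 : ∀ j : Fin n,
        (if (Matrix.vecMul m G) j = 1 then (1:ℝ) else -1) = - sgn (Matrix.vecMul m G j) := by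
      intro j
      rcases (by decide : ∀ c : ZMod 2, c = 0 ∨ c = 1) (Matrix.vecMul m G j) with h | h <;>
        simp [h, sgn]
    have hip : ∑ t, Matrix.vecMul m G (idx t) = ∑ r, m r * (∑ t, Gᵀ (idx t)) r := by
      simp_rw [hval]
      rw [Finset.sum_comm]
      refine Finset.sum_congr rfl fun r _ => ?_
      simp [Finset.mul_sum, Finset.sum_apply, Matrix.transpose_apply]
    have hprod : ∏ t, (if (Matrix.vecMul m G) (idx t) = 1 then (1:ℝ) else -1)
        = (-1:ℝ)^l * sgn (∑ r, m r * (∑ t, Gᵀ (idx t)) r) := by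
      calc ∏ t, (if (Matrix.vecMul m G) (idx t) = 1 then (1:ℝ) else -1)
          = ∏ t, (-1) * sgn (Matrix.vecMul m G (idx t)) := by
            refine Finset.prod_congr rfl fun t _ => ?_
            rw [hsgn1]; ring
        _ = (-1:ℝ)^l * ∏ t, sgn (Matrix.vecMul m G (idx t)) := by
            rw [Finset.prod_mul_distrib, Finset.prod_const, Finset.card_univ, Fintype.card_fin]
        _ = (-1:ℝ)^l * sgn (∑ t, Matrix.vecMul m G (idx t)) := by rw [sgn_sum]
        _ = _ := by rw [hip]
    have hsplit : sgn (∑ r, m r * ((∑ t, Gᵀ (idx t)) + Gᵀ i) r)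
        = sgn (∑ r, m r * (∑ t, Gᵀ (idx t)) r) * sgn (∑ r, m r * Gᵀ i r) := by
      rw [← sgn_add]
      congr 1
      rw [← Finset.sum_add_distrib]
      refine Finset.sum_congr rfl fun r _ => ?_
      simp [mul_add]
    have hind : (if (Matrix.vecMul m G) i = 1 then
        ∏ t, (if (Matrix.vecMul m G) (idx t) = 1 then (1:ℝ) else -1) else 0)
        = (1 - sgn (∑ r, m r * Gᵀ i r)) / 2 *
          ((-1:ℝ)^l * sgn (∑ r, m r * (∑ t, Gᵀ (idx t)) r)) := by
      rw [← hprod, indicator_eq, hval m i]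
      rfl
    rw [hind, hsplit]
    ring
  rw [Finset.sum_congr rfl fun m _ => key m, ← Finset.mul_sum, Finset.sum_sub_distrib,
    sum_sgn, sum_sgn]


lemma Pfun_center {n : ℕ} (S : Finset (Fin n)) (x : Fin n → ZMod 2) :
    Pfun S x (pcenter n) = (1/2:ℝ)^S.card := by
  rw [Pfun, Finset.prod_congr rfl (fun j _ => ?_), Finset.prod_const]
  show (if x j = 1 then pcenter n j else 1 - pcenter n j) = 1/2
  unfold pcenter
  split <;> norm_num

lemma deriv_Ifun_sum {k n : ℕ} (G : Matrix (Fin k) (Fin n) (ZMod 2)) (i : Fin n)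
    (l : ℕ) (idx : Fin l → Fin n) :
    iteratedFDeriv ℝ l (Ifun G i) (pcenter n) (fun t => Pi.single (idx t) (1:ℝ)) =
      ∑ x ∈ (code G).filter (fun x => x i = 1),
        (if Function.Injective idx then
          (∏ t, (if x (idx t) = 1 then (1:ℝ) else -1)) *
            Pfun (Finset.univ \ Finset.image idx Finset.univ) x (pcenter n)
        else 0) := by
  classical
  have hIfun : Ifun G i =
      (∑ x ∈ (code G).filter (fun x => x i = 1), Pfun Finset.univ x ·) := by
    funext u
    simp only [Ifun, codePoly, Pfun, Finset.sum_apply]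
  rw [hIfun, iteratedFDeriv_sum (fun x _ => contDiff_Pfun _ _)]
  simp only [Finset.sum_apply, ContinuousMultilinearMap.sum_apply]
  refine Finset.sum_congr rfl fun x _ => ?_
  rw [iter_Pfun]
  simp only [Finset.mem_univ, implies_true, and_true]

/-- Classification of the mixed partial derivatives `∂^l I_i/∂u_{i_1}⋯∂u_{i_l}(p)` (`l ≥ 2`):
`0` under condition C0 (a repeated index) or C1 (distinct indices with
`g_{i_1} + ⋯ + g_{i_l}` neither `0` nor `g_i`); `(-1)^(l+1) 2^(-n+k+l-1)` under C2
(distinct indices with `g_{i_1} + ⋯ + g_{i_l} = g_i`); `(-1)^l 2^(-n+k+l-1)` under C3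
(distinct indices with `g_{i_1} + ⋯ + g_{i_l} = 0`). -/
theorem stmt15 {k n : ℕ} (hk : 0 < k) (hkn : k ≤ n)
    (G : Matrix (Fin k) (Fin n) (ZMod 2))
    (hrank : G.rank = k) (hcols : ∀ i : Fin n, Gᵀ i ≠ 0)
    (l : ℕ) (hl : 2 ≤ l) (i : Fin n) (idx : Fin l → Fin n) :
    (¬ Function.Injective idx →
      iteratedFDeriv ℝ l (Ifun G i) (pcenter n) (fun t => Pi.single (idx t) (1:ℝ)) = 0) ∧
    (Function.Injective idx → (∑ t, Gᵀ (idx t)) ≠ 0 → (∑ t, Gᵀ (idx t)) ≠ Gᵀ i →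
      iteratedFDeriv ℝ l (Ifun G i) (pcenter n) (fun t => Pi.single (idx t) (1:ℝ)) = 0) ∧
    (Function.Injective idx → (∑ t, Gᵀ (idx t)) = Gᵀ i →
      iteratedFDeriv ℝ l (Ifun G i) (pcenter n) (fun t => Pi.single (idx t) (1:ℝ)) =
        (-1 : ℝ) ^ (l + 1) * (2 : ℝ) ^ (-(n : ℤ) + (k : ℤ) + (l : ℤ) - 1)) ∧
    (Function.Injective idx → (∑ t, Gᵀ (idx t)) = 0 →
      iteratedFDeriv ℝ l (Ifun G i) (pcenter n) (fun t => Pi.single (idx t) (1:ℝ)) =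
        (-1 : ℝ) ^ l * (2 : ℝ) ^ (-(n : ℤ) + (k : ℤ) + (l : ℤ) - 1)) := by
  classical
  have hD := deriv_Ifun_sum G i l idx
  have hall : ∀ c : ZMod 2, c + c = 0 := by decide
  refine ⟨?_, ?_, ?_, ?_⟩
  · intro hni
    rw [hD, Finset.sum_congr rfl fun x _ => if_neg hni, Finset.sum_const, smul_zero]
  all_goals
    intro hinj
    have hln : l ≤ n := by
      have := Fintype.card_le_of_injective idx hinj
      simpa using this
    have hcard : (Finset.univ \ Finset.image idx Finset.univ : Finset (Fin n)).card = n - l := by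
      rw [Finset.card_sdiff_of_subset (Finset.subset_univ _), Finset.card_univ, Fintype.card_fin,
        Finset.card_image_of_injective _ hinj, Finset.card_univ, Fintype.card_fin]
    have hval : iteratedFDeriv ℝ l (Ifun G i) (pcenter n) (fun t => Pi.single (idx t) (1:ℝ)) =
        ((-1:ℝ)^l / 2 * ((if (∑ t, Gᵀ (idx t)) = 0 then (2:ℝ)^k else 0)
          - (if (∑ t, Gᵀ (idx t)) + Gᵀ i = 0 then (2:ℝ)^k else 0))) * (1/2:ℝ)^(n-l) := by
      rw [hD, Finset.sum_congr rfl fun x _ => ?_, ← Finset.sum_mul, char_sum G hrank i l idx]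
      rw [if_pos hinj, Pfun_center, hcard]
    have hpow : ((2:ℝ)) ^ (-(n : ℤ) + (k : ℤ) + (l : ℤ) - 1) =
        (2:ℝ)^(k:ℕ) / 2 * (1/2:ℝ)^(n-l) := by
      have h1 : ((1:ℝ)/2)^(n-l) = (2:ℝ)^(-((n-l:ℕ):ℤ)) := by
        rw [one_div, inv_pow, ← zpow_natCast (2:ℝ) (n-l), ← _root_.zpow_neg]
      have h2 : (2:ℝ)^(k:ℕ)/2 = (2:ℝ)^((k:ℤ)-1) := by
        rw [← zpow_natCast (2:ℝ) k, zpow_sub₀ (by norm_num : (2:ℝ) ≠ 0), zpow_one]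
      rw [h1, h2, ← zpow_add₀ (by norm_num : (2:ℝ) ≠ 0)]
      congr 1
      omega
  · -- C1
    intro hv0 hvi
    have h2 : (∑ t, Gᵀ (idx t)) + Gᵀ i ≠ 0 := by
      intro h
      apply hvi
      rw [add_eq_zero_iff_eq_neg] at h
      rw [h]
      funext r
      simp only [Pi.neg_apply]
      exact (by decide : ∀ c : ZMod 2, -c = c) _
    rw [hval, if_neg hv0, if_neg h2]
    norm_num
  · -- C2
    intro hv
    have h1 : ¬ ((∑ t, Gᵀ (idx t)) = 0) := by rw [hv]; exact hcols i
    have h2 : (∑ t, Gᵀ (idx t)) + Gᵀ i = 0 := by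
      rw [hv]; funext r
      exact hall _
    rw [hval, if_neg h1, if_pos h2, hpow]
    ring
  · -- C3
    intro hv
    have h2 : (∑ t, Gᵀ (idx t)) + Gᵀ i ≠ 0 := by
      rw [hv, zero_add]; exact hcols i
    rw [hval, if_pos hv, if_neg h2, hpow]
    ring
end

section
/- Let l ≥ 2, let ε ∈ (0, 1/2), and for each i define the truncated map f̃_i(u) = u_i + Σ_{(i_1,…,i_l)∈Θ_i^{(l)}} (−2)^{l−1} (u_{i_1} − 1/2)⋯(u_{i_l} − 1/2), where Θ_i^{(l)} = {(i_1,…,i_l) : 1 ≤ i_1 < ⋯ < i_l ≤ n, i_k ≠ i for all k, g_i + g_{i_1} + ⋯ + g_{i_l} = 0 in 𝔽₂^k}. Let y ∈ C be a codeword and define u⁰ ∈ ℝ^n by u⁰_i = ε if y_i = 0 and u⁰_i = 1 − ε if y_i = 1. Then for every i: if y_i = 1 then f̃_i(u⁰) ≥ 1 − ε > 1/2, and if y_i = 0 then f̃_i(u⁰) ≤ ε < 1/2. Consequently the approximate ML decoding rule (which decodes bit i as 1 iff f̃_i(u⁰) ≥ 1/2) decodes every codeword to itself. -/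
open Matrix Finset

/-- The truncated map `f̃_i(u) = u_i + Σ_{(i_1,…,i_l) ∈ Θ_i^(l)} (-2)^(l-1)
(u_{i_1} - 1/2) ⋯ (u_{i_l} - 1/2)`, where the tuples `i_1 < ⋯ < i_l` are identified with
`l`-element subsets `s` of the indices, subject to `i ∉ s` and
`g_i + Σ_{j ∈ s} g_j = 0`. -/
noncomputable def ftilde {k n : ℕ} (G : Matrix (Fin k) (Fin n) (ZMod 2)) (l : ℕ)
    (u : Fin n → ℝ) (i : Fin n) : ℝ :=
  u i + ∑ s ∈ Finset.powersetCard l Finset.univ,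
    if i ∉ s ∧ (Gᵀ i + ∑ j ∈ s, Gᵀ j) = 0 then
      (-2 : ℝ) ^ (l - 1) * ∏ j ∈ s, (u j - 1/2)
    else 0

noncomputable def chiZ (a : ZMod 2) : ℝ := if a = 0 then 1 else -1

lemma chiZ_add (a b : ZMod 2) : chiZ (a + b) = chiZ a * chiZ b := by
  rcases (show ∀ a : ZMod 2, a = 0 ∨ a = 1 by decide) a with rfl | rfl <;>
    rcases (show ∀ a : ZMod 2, a = 0 ∨ a = 1 by decide) b with rfl | rfl <;>
    simp [chiZ, show ((1:ZMod 2)+1) = 0 from by decide, show (1:ZMod 2) ≠ 0 from by decide]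

lemma chiZ_sum {α : Type*} (s : Finset α) (f : α → ZMod 2) :
    chiZ (∑ j ∈ s, f j) = ∏ j ∈ s, chiZ (f j) := by
  classical
  induction s using Finset.cons_induction with
  | empty => simp [chiZ]
  | cons a s ha ih => rw [Finset.sum_cons, Finset.prod_cons, chiZ_add, ih]

/-- For a codeword `y ∈ C` and the initial point `u⁰` (`u⁰_i = ε` if `y_i = 0`,
`u⁰_i = 1-ε` if `y_i = 1`, `0 < ε < 1/2`): if `y_i = 1` then `f̃_i(u⁰) ≥ 1-ε > 1/2`, and
if `y_i = 0` then `f̃_i(u⁰) ≤ ε < 1/2`; consequently the approximate ML decoding rule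
(decode bit `i` as `1` iff `f̃_i(u⁰) ≥ 1/2`) decodes every codeword to itself. -/
theorem stmt17 {k n : ℕ} (hk : 0 < k) (hkn : k ≤ n)
    (G : Matrix (Fin k) (Fin n) (ZMod 2))
    (hrank : G.rank = k) (hcols : ∀ i : Fin n, Gᵀ i ≠ 0)
    (l : ℕ) (hl : 2 ≤ l) (ε : ℝ) (hε : ε ∈ Set.Ioo (0 : ℝ) (1/2))
    (y : Fin n → ZMod 2) (hy : y ∈ code G) :
    ∀ i : Fin n,
      (y i = 1 → 1 - ε ≤ ftilde G l (fun j => if y j = 0 then ε else 1 - ε) i ∧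
        (1/2 : ℝ) < 1 - ε) ∧
      (y i = 0 → ftilde G l (fun j => if y j = 0 then ε else 1 - ε) i ≤ ε ∧
        ε < (1/2 : ℝ)) ∧
      (if (1/2 : ℝ) ≤ ftilde G l (fun j => if y j = 0 then ε else 1 - ε) i
        then (1 : ZMod 2) else 0) = y i := by
  classical
  obtain ⟨m, -, hm⟩ := Finset.mem_image.mp hy
  obtain ⟨hε0, hε2⟩ := hε
  intro i
  set u : Fin n → ℝ := fun j => if y j = 0 then ε else 1 - ε with hu
  have hhalf : (0:ℝ) ≤ 1/2 - ε := by linarith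
  have hyj : ∀ j, y j = ∑ t, m t * Gᵀ j t := by
    intro j
    rw [← hm]
    simp [Matrix.vecMul, dotProduct, Matrix.transpose_apply]
  have key : ∀ s ∈ Finset.powersetCard l (Finset.univ : Finset (Fin n)),
      (if i ∉ s ∧ (Gᵀ i + ∑ j ∈ s, Gᵀ j) = 0 then
        (-2 : ℝ) ^ (l - 1) * ∏ j ∈ s, (u j - 1/2)
      else 0)
      = (if i ∉ s ∧ (Gᵀ i + ∑ j ∈ s, Gᵀ j) = 0 then
          -(2 ^ (l - 1) * (1/2 - ε) ^ l * chiZ (y i)) else 0) := by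
    intro s hs
    have hcard : s.card = l := (Finset.mem_powersetCard.mp hs).2
    split_ifs with h
    · obtain ⟨his, hsum⟩ := h
      have hpar : (∑ j ∈ s, y j) = y i := by
        have h0 : y i + ∑ j ∈ s, y j = 0 := by
          have := congrFun hsum
          simp only [Pi.add_apply, Finset.sum_apply, Pi.zero_apply] at this
          calc y i + ∑ j ∈ s, y j
              = ∑ t, m t * Gᵀ i t + ∑ j ∈ s, ∑ t, m t * Gᵀ j t := by
                rw [hyj i]; congr 1; exact Finset.sum_congr rfl fun j _ => hyj j
            _ = ∑ t, m t * (Gᵀ i t + ∑ j ∈ s, Gᵀ j t) := by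
                rw [Finset.sum_comm (s := s)]
                rw [← Finset.sum_add_distrib]
                exact Finset.sum_congr rfl fun t _ => by rw [mul_add, Finset.mul_sum]
            _ = 0 := by
                refine Finset.sum_eq_zero fun t _ => ?_
                apply mul_eq_zero_of_right
                rw [← Finset.sum_apply (a := t) s (fun j => Gᵀ j)]
                exact congrFun hsum t
        have := eq_neg_of_add_eq_zero_right h0
        rw [this, CharTwo.neg_eq]
      have hfac : ∀ j ∈ s, u j - 1/2 = (1/2 - ε) * (-chiZ (y j)) := by
        intro j _
        by_cases hj : y j = 0 <;> simp [hu, chiZ, hj] <;> ring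
      have hprod : ∏ j ∈ s, (u j - 1/2) = (1/2 - ε) ^ l * ((-1) ^ l * chiZ (y i)) := by
        rw [Finset.prod_congr rfl hfac, Finset.prod_mul_distrib, Finset.prod_const, hcard]
        congr 1
        have : ∀ j ∈ s, -chiZ (y j) = (-1) * chiZ (y j) := fun j _ => by ring
        rw [Finset.prod_congr rfl this, Finset.prod_mul_distrib, Finset.prod_const, hcard,
          ← chiZ_sum, hpar]
      rw [hprod]
      have hsg : ((-2 : ℝ)) ^ (l - 1) * (-1) ^ l = -(2 ^ (l - 1)) := by
        have h1 : ((-2 : ℝ)) ^ (l - 1) = (-1) ^ (l - 1) * 2 ^ (l - 1) := by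
          rw [← neg_one_mul, mul_pow]
        have h2 : ((-1 : ℝ)) ^ (l - 1) * (-1) ^ l = -1 := by
          rw [← pow_add, show l - 1 + l = 2 * (l - 1) + 1 from by omega, pow_succ, pow_mul]
          norm_num
        rw [h1]
        linear_combination (2 : ℝ) ^ (l - 1) * h2
      linear_combination ((1/2 - ε) ^ l * chiZ (y i)) * hsg
    · rfl
  have hy01 : y i = 0 ∨ y i = 1 := by
    have : ∀ a : ZMod 2, a = 0 ∨ a = 1 := by decide
    exact this (y i)
  have hterm : (0:ℝ) ≤ 2 ^ (l - 1) * (1/2 - ε) ^ l := by positivity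
  have hmain : ftilde G l u i = u i + ∑ s ∈ Finset.powersetCard l (Finset.univ : Finset (Fin n)),
      (if i ∉ s ∧ (Gᵀ i + ∑ j ∈ s, Gᵀ j) = 0 then
        -(2 ^ (l - 1) * (1/2 - ε) ^ l * chiZ (y i)) else 0) := by
    rw [ftilde]
    congr 1
    exact Finset.sum_congr rfl key
  rcases hy01 with h0 | h1
  · have hchi : chiZ (y i) = 1 := by simp [chiZ, h0]
    have hui : u i = ε := by simp [hu, h0]
    have hle : ftilde G l u i ≤ ε := by
      rw [hmain, hui]
      have : ∑ s ∈ Finset.powersetCard l (Finset.univ : Finset (Fin n)),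
          (if i ∉ s ∧ (Gᵀ i + ∑ j ∈ s, Gᵀ j) = 0 then
            -(2 ^ (l - 1) * (1/2 - ε) ^ l * chiZ (y i)) else 0) ≤ 0 := by
        apply Finset.sum_nonpos
        intro s _
        split_ifs
        · rw [hchi]; nlinarith
        · exact le_refl _
      linarith
    refine ⟨fun h => by rw [h0] at h; exact absurd h (by decide), fun _ => ⟨hle, hε2⟩, ?_⟩
    rw [if_neg (by linarith), h0]
  · have hchi : chiZ (y i) = -1 := by simp [chiZ, h1]
    have hui : u i = 1 - ε := by
      have : y i ≠ 0 := by rw [h1]; decide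
      simp [hu, this]
    have hge : 1 - ε ≤ ftilde G l u i := by
      rw [hmain, hui]
      have : (0:ℝ) ≤ ∑ s ∈ Finset.powersetCard l (Finset.univ : Finset (Fin n)),
          (if i ∉ s ∧ (Gᵀ i + ∑ j ∈ s, Gᵀ j) = 0 then
            -(2 ^ (l - 1) * (1/2 - ε) ^ l * chiZ (y i)) else 0) := by
        apply Finset.sum_nonneg
        intro s _
        split_ifs
        · rw [hchi]; nlinarith
        · exact le_refl _
      linarith
    refine ⟨fun _ => ⟨hge, by linarith⟩, fun h => by rw [h1] at h; exact absurd h (by decide), ?_⟩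
    rw [if_pos (by linarith), h1]
end
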